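/- Let H be a subgroup of a countable group G such that the action of G on G/H is amenable (equivalently, ℓ²(G/H) admits asymptotically invariant unit vectors for the quasi-regular representation). Then every orthogonal representation π of G is weakly contained in the sense of Zimmer in the induced representation Ind_H^G(π|H). -/

import Mathlib

open Filter

/-- The coset cocycle `ρ(g, kH) = σ(g·kH)⁻¹ g σ(kH)` associated to a section `σ`. -/
def cosetCocycle {G : Type*} [Group G] (H : Subgroup G) (σ : G ⧸ H → G)
    (g : G) (k : G ⧸ H) : G :=
  (σ (g • k))⁻¹ * g * σ k

/-- Lemma 7.2: if the action of `G` on `G/H` is amenable (asymptotically invariant unit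
vectors for the quasi-regular representation exist), then every orthogonal representation
`π` of `G` is weakly contained in the sense of Zimmer in `Ind_H^G(π|H)`, realized on
`K`-valued ℓ²-functions on `G/H` via the coset cocycle. -/
theorem zimmer_weak_containment_induced {G : Type*} [Group G] [Countable G]
    (H : Subgroup G) {K : Type*} [NormedAddCommGroup K] [InnerProductSpace ℝ K]
    (π : G →* (K ≃ₗᵢ[ℝ] K))
    (σ : G ⧸ H → G) (hσ : ∀ q : G ⧸ H, ((σ q : G) : G ⧸ H) = q)
    (hσ1 : σ ((1 : G) : G ⧸ H) = 1)
    (hamen : ∃ u : ℕ → (G ⧸ H) → ℝ, (∀ n, ∑' x : G ⧸ H, (u n x) ^ 2 = 1) ∧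
      ∀ g : G, Tendsto (fun n => ∑' x : G ⧸ H, u n (g⁻¹ • x) * u n x) atTop (nhds 1))
    (k : ℕ) (v : Fin k → K) (ε : ℝ) (hε : 0 < ε) (F : Finset G) :
    ∃ w : Fin k → (G ⧸ H) → K, ∀ g ∈ F, ∀ i j : Fin k,
      |(inner ℝ (π g (v i)) (v j) : ℝ) -
        ∑' x : G ⧸ H,
          (inner ℝ (π (cosetCocycle H σ g (g⁻¹ • x)) (w i (g⁻¹ • x))) (w j x) : ℝ)| < ε := by
  obtain ⟨u, hu1, hu2⟩ := hamen
  set C : ℝ := 1 + ∑ i : Fin k, ‖v i‖ ^ 2 with hCdef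
  have hsum0 : (0:ℝ) ≤ ∑ i : Fin k, ‖v i‖ ^ 2 := Finset.sum_nonneg fun i _ => by positivity
  have hC0 : 0 < C := by positivity
  have habd : ∀ (g : G) (i j : Fin k), |(inner ℝ (π g (v i)) (v j) : ℝ)| ≤ C := by
    intro g i j
    have h1 : |(inner ℝ (π g (v i)) (v j) : ℝ)| ≤ ‖π g (v i)‖ * ‖v j‖ := abs_real_inner_le_norm _ _
    have h2 : ‖π g (v i)‖ = ‖v i‖ := (π g).norm_map _
    have h3 : ‖v i‖ ^ 2 ≤ ∑ l : Fin k, ‖v l‖ ^ 2 :=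
      Finset.single_le_sum (f := fun l => ‖v l‖ ^ 2) (fun l _ => by positivity) (Finset.mem_univ i)
    have h4 : ‖v j‖ ^ 2 ≤ ∑ l : Fin k, ‖v l‖ ^ 2 :=
      Finset.single_le_sum (f := fun l => ‖v l‖ ^ 2) (fun l _ => by positivity) (Finset.mem_univ j)
    nlinarith [norm_nonneg (v i), norm_nonneg (v j), sq_nonneg (‖v i‖ - ‖v j‖)]
  have key : ∀ᶠ n in atTop, ∀ g ∈ F,
      |(∑' x : G ⧸ H, u n (g⁻¹ • x) * u n x) - 1| < ε / C := by
    rw [eventually_all_finset]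
    intro g hg
    have := (Metric.tendsto_atTop.mp (hu2 g)) (ε / C) (by positivity)
    obtain ⟨N, hN⟩ := this
    filter_upwards [eventually_ge_atTop N] with n hn
    simpa [Real.dist_eq] using hN n hn
  obtain ⟨n, hn⟩ := key.exists
  refine ⟨fun i x => u n x • (π ((σ x)⁻¹) (v i)), ?_⟩
  intro g hg i j
  have hterm : ∀ x : G ⧸ H,
      (inner ℝ (π (cosetCocycle H σ g (g⁻¹ • x))
          (u n (g⁻¹ • x) • (π ((σ (g⁻¹ • x))⁻¹) (v i))))
        (u n x • (π ((σ x)⁻¹) (v j))) : ℝ)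
      = (u n (g⁻¹ • x) * u n x) * (inner ℝ (π g (v i)) (v j) : ℝ) := by
    intro x
    have hcomp : ∀ (a b : G) (z : K), π a (π b z) = π (a * b) z := by
      intro a b z
      rw [map_mul]
      rfl
    rw [cosetCocycle, smul_inv_smul, map_smul, real_inner_smul_left, real_inner_smul_right,
      hcomp]
    have hgrp : (σ x)⁻¹ * g * σ (g⁻¹ • x) * (σ (g⁻¹ • x))⁻¹ = (σ x)⁻¹ * g := by group
    rw [hgrp, ← hcomp ((σ x)⁻¹) g (v i), LinearIsometryEquiv.inner_map_map]
    ring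
  rw [tsum_congr hterm, tsum_mul_right]
  have hS := hn g hg
  set S : ℝ := ∑' x : G ⧸ H, u n (g⁻¹ • x) * u n x with hSdef
  set a : ℝ := (inner ℝ (π g (v i)) (v j) : ℝ) with hadef
  have : a - S * a = (1 - S) * a := by ring
  rw [this, abs_mul]
  have h1 : |1 - S| < ε / C := by rwa [abs_sub_comm]
  calc |1 - S| * |a| ≤ |1 - S| * C := by
        exact mul_le_mul_of_nonneg_left (habd g i j) (abs_nonneg _)
    _ < (ε / C) * C := by exact mul_lt_mul_of_pos_right h1 hC0
    _ = ε := by field_simp
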